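/- arXiv:0806.1818 — 2 statements merged into one kernel-verified Lean document; each statement's English description precedes it below -/
import Mathlib

section
/- Let ∅ = F_0 ⊂ F_1 ⊂ ⋯ ⊂ F_k ⊂ F_{k+1} = E be a chain of flats of M. For i = 0,…,k let S_i ⊆ F_{i+1} \ F_i be such that S_i ∪ F_i is a flat of M, and set S := S_0 ∪ ⋯ ∪ S_k. Then for every line l ∈ L, a(S)_l = ∑_{i=0}^{k} (a(S_i ∪ F_i)_l − a(F_i)_l). -/
open Set

variable {α : Type*}

/-- The rank of a set in a matroid: the supremum of the cardinalities of its
independent subsets. -/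
noncomputable def Matroid.rk' (M : Matroid α) (X : Set α) : ℕ :=
  sSup {n : ℕ | ∃ I, M.Indep I ∧ I ⊆ X ∧ I.ncard = n}

/-- A matroid is loopless if the closure of the empty set is empty. -/
def Matroid.Loopless' (M : Matroid α) : Prop := M.closure ∅ = ∅

/-- A line of a matroid: a subset of the ground set of rank 1 or 2. -/
def Matroid.IsLine (M : Matroid α) (l : Set α) : Prop :=
  l ⊆ M.E ∧ (M.rk' l = 1 ∨ M.rk' l = 2)

open scoped Classical in
/-- Degree `a(X)_l` of a set `X` at a line `l`. -/
noncomputable def deg (X l : Set α) : ℕ :=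
  if X ∩ l = ∅ then 0 else if l ⊆ X then 2 else 1

/-- A fractional matching of the pair `(M, L)`. -/
def IsFracMatching (M : Matroid α) (L : Finset (Set α)) (x : Set α → ℝ) : Prop :=
  (∀ l ∈ L, 0 ≤ x l) ∧
  ∀ F : Set α, M.IsFlat F → ∑ l ∈ L, (deg F l : ℝ) * x l ≤ (M.rk' F : ℝ)

/-- `a(y)_l` for a finitely supported `y` on flats. -/
noncomputable def aDual (y : Set α →₀ ℝ) (l : Set α) : ℝ :=
  y.sum fun F c => c * (deg F l : ℝ)

/-- `r(y)` for a finitely supported `y` on flats. -/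
noncomputable def rDual (M : Matroid α) (y : Set α →₀ ℝ) : ℝ :=
  y.sum fun F c => c * (M.rk' F : ℝ)

section degLemmas

variable {X Y l : Set α}

lemma deg_le_two (X l : Set α) : deg X l ≤ 2 := by
  unfold deg; split_ifs <;> omega

lemma deg_of_inter_empty (h : X ∩ l = ∅) : deg X l = 0 := by
  simp [deg, h]

lemma inter_empty_of_deg (h : deg X l = 0) : X ∩ l = ∅ := by
  by_contra hne
  unfold deg at h
  rw [if_neg hne] at h
  split_ifs at h <;> omega

lemma deg_two_of (h : l ⊆ X) (hne : l.Nonempty) : deg X l = 2 := by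
  have hX : X ∩ l ≠ ∅ := by
    obtain ⟨x, hx⟩ := hne
    exact fun he => absurd (mem_inter (h hx) hx) (he ▸ notMem_empty x)
  simp [deg, hX, h]

lemma deg_one_of (h1 : (X ∩ l).Nonempty) (h2 : ¬ l ⊆ X) : deg X l = 1 := by
  simp [deg, h1.ne_empty, h2]

lemma subset_of_deg_two (h : deg X l = 2) : l ⊆ X := by
  by_contra hc
  rcases eq_empty_or_nonempty (X ∩ l) with h0 | h0
  · rw [deg_of_inter_empty h0] at h; omega
  · rw [deg_one_of h0 hc] at h; omega

lemma deg_mono (h : X ⊆ Y) : deg X l ≤ deg Y l := by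
  rcases eq_empty_or_nonempty (X ∩ l) with h0 | h0
  · rw [deg_of_inter_empty h0]; omega
  · have hY : (Y ∩ l).Nonempty := h0.mono (inter_subset_inter_left _ h)
    by_cases hlX : l ⊆ X
    · have hlne : l.Nonempty := by
        obtain ⟨x, hx⟩ := h0; exact ⟨x, hx.2⟩
      rw [deg_two_of hlX hlne, deg_two_of (hlX.trans h) hlne]
    · rw [deg_one_of h0 hlX]
      by_cases hlY : l ⊆ Y
      · have hlne : l.Nonempty := by
          obtain ⟨x, hx⟩ := h0; exact ⟨x, hx.2⟩
        rw [deg_two_of hlY hlne]; omega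
      · rw [deg_one_of hY hlY]

lemma deg_congr (h : X ∩ l = Y ∩ l) : deg X l = deg Y l := by
  have hsub : ∀ {A B : Set α}, A ∩ l = B ∩ l → (l ⊆ A → l ⊆ B) := by
    intro A B hAB hlA x hx
    have : x ∈ B ∩ l := hAB ▸ mem_inter (hlA hx) hx
    exact this.1
  unfold deg
  rw [h]
  by_cases h2 : l ⊆ X
  · rw [if_pos h2, if_pos (hsub h h2)]
  · rw [if_neg h2, if_neg (fun hY => h2 (hsub h.symm hY))]

end degLemmas

section rkLemmas

variable {M : Matroid α} {l : Set α}

lemma Matroid.ncard_le_rk' (M : Matroid α) [M.RankFinite] {I X : Set α}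
    (hI : M.Indep I) (hIX : I ⊆ X) : I.ncard ≤ M.rk' X := by
  obtain ⟨B0, hB0⟩ := M.exists_isBase
  apply le_csSup
  · refine ⟨B0.ncard, ?_⟩
    rintro n ⟨J, hJ, -, rfl⟩
    obtain ⟨B, hB, hJB⟩ := hJ.exists_isBase_superset
    calc J.ncard ≤ B.ncard := ncard_le_ncard hJB hB.finite
    _ = B0.ncard := hB.ncard_eq_ncard_of_isBase hB0
  · exact ⟨I, hI, hIX, rfl⟩

lemma line_nonempty (hl : M.IsLine l) : l.Nonempty := by
  rw [nonempty_iff_ne_empty]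
  rintro rfl
  have h0 : M.rk' ∅ = 0 := by
    have hset : {n : ℕ | ∃ I, M.Indep I ∧ I ⊆ (∅ : Set α) ∧ I.ncard = n} = {0} := by
      ext n
      simp only [mem_setOf_eq, mem_singleton_iff]
      constructor
      · rintro ⟨I, -, hI, rfl⟩
        simp [subset_empty_iff.mp hI]
      · rintro rfl
        exact ⟨∅, M.empty_indep, subset_rfl, ncard_empty α⟩
    rw [Matroid.rk', hset, csSup_singleton]
  rcases hl.2 with h | h <;> omega

lemma key_line_subset [M.RankFinite] (hM : M.Loopless') (hl : M.IsLine l) {F G : Set α}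
    (hF : M.IsFlat F) (hG : M.IsFlat G) (hFG : F ⊆ G) {e f : α}
    (he : e ∈ F) (hel : e ∈ l) (hf : f ∈ G) (hfl : f ∈ l) (hfF : f ∉ F) : l ⊆ G := by
  have heE : e ∈ M.E := hl.1 hel
  have hfE : f ∈ M.E := hl.1 hfl
  have hesing : M.Indep {e} := by
    rw [show ({e} : Set α) = insert e ∅ by simp, M.empty_indep.insert_indep_iff]
    left
    rw [Matroid.Loopless'] at hM
    exact ⟨heE, by simp [hM]⟩
  have hfcl : f ∉ M.closure {e} := by
    intro hcl
    apply hfF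
    have hsub : M.closure {e} ⊆ M.closure F :=
      M.closure_subset_closure (singleton_subset_iff.2 he)
    rw [hF.closure] at hsub
    exact hsub hcl
  have hef : M.Indep (insert f {e}) := by
    rw [hesing.insert_indep_iff]
    left
    exact ⟨hfE, hfcl⟩
  have hne : f ≠ e := by
    rintro rfl
    exact hfcl (M.subset_closure {f} (singleton_subset_iff.2 hfE) (mem_singleton f))
  have hcard : (insert f {e} : Set α).ncard = 2 := by
    rw [ncard_insert_of_notMem (by simpa) (finite_singleton e), ncard_singleton]
  have h2 : 2 ≤ M.rk' l := by
    have := M.ncard_le_rk' hef (insert_subset hfl (singleton_subset_iff.2 hel))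
    omega
  have hrk : M.rk' l = 2 := by rcases hl.2 with h | h <;> omega
  intro x hx
  have hxcl : x ∈ M.closure (insert f {e}) := by
    by_contra hxn
    have hxnotin : x ∉ insert f {e} :=
      fun hmem => hxn (M.subset_closure _ hef.subset_ground hmem)
    have hx3 : M.Indep (insert x (insert f {e})) := by
      rw [hef.insert_indep_iff]
      left
      exact ⟨hl.1 hx, hxn⟩
    have hc3 : (insert x (insert f {e}) : Set α).ncard = 3 := by
      rw [ncard_insert_of_notMem hxnotin ((finite_singleton e).insert f), hcard]
    have := M.ncard_le_rk' hx3
      (insert_subset hx (insert_subset hfl (singleton_subset_iff.2 hel)))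
    omega
  have hsub : M.closure (insert f {e}) ⊆ G := by
    rw [← hG.closure]
    exact M.closure_subset_closure (insert_subset hf (singleton_subset_iff.2 (hFG he)))
  exact hsub hxcl

lemma deg_flat_step [M.RankFinite] (hM : M.Loopless') (hl : M.IsLine l) {F G : Set α}
    (hF : M.IsFlat F) (hG : M.IsFlat G) (hFG : F ⊆ G) (h : deg F l = deg G l) :
    G ∩ l ⊆ F := by
  rintro f ⟨hfG, hfl⟩
  by_contra hfF
  rcases eq_empty_or_nonempty (F ∩ l) with h0 | ⟨e, heF, hel⟩
  · rw [deg_of_inter_empty h0] at h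
    have : G ∩ l = ∅ := inter_empty_of_deg h.symm
    exact absurd (mem_inter hfG hfl) (this ▸ notMem_empty f)
  · have hlG : l ⊆ G := key_line_subset hM hl hF hG hFG heF hel hfG hfl hfF
    have hdG : deg G l = 2 := deg_two_of hlG ⟨f, hfl⟩
    have hdF : deg F l = 1 := deg_one_of ⟨e, heF, hel⟩ (fun hsub => hfF (hsub hfl))
    omega

end rkLemmas

/-- degree decomposition along a chain of flats. -/
theorem stmt_6 (M : Matroid α) [M.RankFinite] (hM : M.Loopless')
    (L : Finset (Set α)) (hL : ∀ l ∈ L, M.IsLine l)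
    (k : ℕ) (F : ℕ → Set α) (hF0 : F 0 = ∅) (hFE : F (k+1) = M.E)
    (hFflat : ∀ i ≤ k+1, M.IsFlat (F i)) (hFmono : ∀ i ≤ k, F i ⊂ F (i+1))
    (S : ℕ → Set α)
    (hS : ∀ i ≤ k, S i ⊆ F (i+1) \ F i ∧ M.IsFlat (S i ∪ F i)) :
    ∀ l ∈ L, (deg (⋃ i ∈ Finset.range (k+1), S i) l : ℤ)
      = ∑ i ∈ Finset.range (k+1), ((deg (S i ∪ F i) l : ℤ) - (deg (F i) l : ℤ)) := by
  intro l hl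
  classical
  have hline : M.IsLine l := hL l hl
  have hlne : l.Nonempty := line_nonempty hline
  set Sall : Set α := ⋃ i ∈ Finset.range (k+1), S i with hSall
  set T : ℤ := ∑ i ∈ Finset.range (k+1), ((deg (S i ∪ F i) l : ℤ) - (deg (F i) l : ℤ)) with hT
  -- basic monotonicity facts
  have hFsub : ∀ i ≤ k, F i ⊆ F (i+1) := fun i hi => (hFmono i hi).subset
  have hFmono' : ∀ i j, i ≤ j → j ≤ k+1 → F i ⊆ F j := by
    intro i j hij hj
    induction j with
    | zero =>
      interval_cases i
      exact subset_rfl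
    | succ n ih =>
      rcases Nat.lt_succ_iff_lt_or_eq.mp (Nat.lt_succ_of_le hij) with h' | h'
      · exact (ih (by omega) (by omega)).trans (hFsub n (by omega))
      · subst h'; exact subset_rfl
  have hSdisj : ∀ i ≤ k, S i ∩ F i = ∅ := by
    intro i hi
    rw [eq_empty_iff_forall_notMem]
    rintro x ⟨hx1, hx2⟩
    exact ((hS i hi).1 hx1).2 hx2
  have hGsub : ∀ i ≤ k, S i ∪ F i ⊆ F (i+1) := fun i hi =>
    union_subset ((hS i hi).1.trans diff_subset) (hFsub i hi)
  have hd0 : deg (F 0) l = 0 := deg_of_inter_empty (by rw [hF0, empty_inter])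
  have hdg : ∀ i, deg (F i) l ≤ deg (S i ∪ F i) l := fun i => deg_mono subset_union_right
  have hterm_nonneg : ∀ i ∈ Finset.range (k+1),
      (0 : ℤ) ≤ (deg (S i ∪ F i) l : ℤ) - (deg (F i) l : ℤ) := by
    intro i _
    have := hdg i
    omega
  -- the sum is at most 2 (telescoping)
  have hsum_le : T ≤ 2 := by
    have h1 : T ≤ ∑ i ∈ Finset.range (k+1), ((deg (F (i+1)) l : ℤ) - (deg (F i) l : ℤ)) := by
      apply Finset.sum_le_sum
      intro i hi
      have := deg_mono (l := l) (hGsub i (Finset.mem_range_succ_iff.mp hi))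
      omega
    rw [Finset.sum_range_sub (fun i => (deg (F i) l : ℤ))] at h1
    have h2 := deg_le_two (F (k+1)) l
    rw [hd0] at h1
    omega
  -- S i ∩ l = ∅ ↔ the i-th term vanishes
  have hiff : ∀ i ≤ k, S i ∩ l = ∅ ↔ deg (S i ∪ F i) l = deg (F i) l := by
    intro i hi
    constructor
    · intro h
      apply deg_congr
      rw [union_inter_distrib_right, h, empty_union]
    · intro h
      have hstep : (S i ∪ F i) ∩ l ⊆ F i :=
        deg_flat_step hM hline (hFflat i (by omega)) (hS i hi).2 subset_union_right h.symm
      rw [eq_empty_iff_forall_notMem]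
      rintro x ⟨hxS, hxl⟩
      have hxF : x ∈ F i := hstep ⟨Or.inl hxS, hxl⟩
      exact (hSdisj i hi ▸ mem_inter hxS hxF : x ∈ (∅ : Set α))
  have hmemSall : ∀ x, x ∈ Sall ↔ ∃ i, i ≤ k ∧ x ∈ S i := by
    intro x
    simp only [hSall, mem_iUnion, Finset.mem_range, Nat.lt_succ_iff, exists_prop]
  -- single nonzero term lower bound
  have hsingle : ∀ i ≤ k, ((deg (S i ∪ F i) l : ℤ) - (deg (F i) l : ℤ)) ≤ T := by
    intro i hi
    exact Finset.single_le_sum hterm_nonneg (Finset.mem_range_succ_iff.mpr hi)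
  have hpair : ∀ i j, i ≤ k → j ≤ k → i ≠ j →
      ((deg (S i ∪ F i) l : ℤ) - (deg (F i) l : ℤ))
        + ((deg (S j ∪ F j) l : ℤ) - (deg (F j) l : ℤ)) ≤ T := by
    intro i j hi hj hij
    have h1 : T = ((deg (S i ∪ F i) l : ℤ) - (deg (F i) l : ℤ))
        + ∑ m ∈ (Finset.range (k+1)).erase i, ((deg (S m ∪ F m) l : ℤ) - (deg (F m) l : ℤ)) :=
      (Finset.add_sum_erase _ _ (Finset.mem_range_succ_iff.mpr hi)).symm
    have h2 : ((deg (S j ∪ F j) l : ℤ) - (deg (F j) l : ℤ))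
        ≤ ∑ m ∈ (Finset.range (k+1)).erase i, ((deg (S m ∪ F m) l : ℤ) - (deg (F m) l : ℤ)) :=
      Finset.single_le_sum (fun m hm => hterm_nonneg m (Finset.mem_of_mem_erase hm))
        (Finset.mem_erase.mpr ⟨hij.symm, Finset.mem_range_succ_iff.mpr hj⟩)
    omega
  -- P3 : if l ⊆ Sall then T ≥ 2
  have hP3 : l ⊆ Sall → 2 ≤ T := by
    intro hls
    by_contra hcon
    push_neg at hcon
    obtain ⟨x, hx⟩ := id hlne
    obtain ⟨i, hi, hxi⟩ := (hmemSall x).mp (hls hx)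
    have hne_i : deg (F i) l < deg (S i ∪ F i) l := by
      have h1 : S i ∩ l ≠ ∅ := fun h => (h ▸ mem_inter hxi hx : x ∈ (∅ : Set α))
      have h2 : deg (S i ∪ F i) l ≠ deg (F i) l := fun h => h1 ((hiff i hi).mpr h)
      have := hdg i
      omega
    have hothers : ∀ j ≤ k, j ≠ i → S j ∩ l = ∅ := by
      intro j hj hji
      apply (hiff j hj).mpr
      by_contra hne_j
      have h2 : deg (F j) l < deg (S j ∪ F j) l := by
        have := hdg j
        omega
      have := hpair i j hi hj (fun h => hji (h.symm))
      omega
    have hlSi : l ⊆ S i := by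
      intro y hy
      obtain ⟨m, hm, hym⟩ := (hmemSall y).mp (hls hy)
      rcases eq_or_ne m i with rfl | hmi
      · exact hym
      · exact absurd (mem_inter hym hy) (by rw [hothers m hm hmi]; exact notMem_empty y)
    have hFl : F i ∩ l = ∅ := by
      rw [eq_empty_iff_forall_notMem]
      rintro y ⟨hyF, hyl⟩
      exact (hSdisj i hi ▸ mem_inter (hlSi hyl) hyF : y ∈ (∅ : Set α))
    have hdFi : deg (F i) l = 0 := deg_of_inter_empty hFl
    have hdGi : deg (S i ∪ F i) l = 2 :=
      deg_two_of (hlSi.trans subset_union_left) hlne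
    have := hsingle i hi
    omega
  -- P4 : if T ≥ 2 then l ⊆ Sall
  have hP4 : 2 ≤ T → l ⊆ Sall := by
    intro hT2
    set Tset : Finset ℕ := (Finset.range (k+1)).filter
      (fun i => deg (F i) l < deg (S i ∪ F i) l) with hTset
    have hTsplit : T = ∑ i ∈ Tset, ((deg (S i ∪ F i) l : ℤ) - (deg (F i) l : ℤ)) := by
      rw [hT, ← Finset.sum_filter_add_sum_filter_not (Finset.range (k+1))
        (fun i => deg (F i) l < deg (S i ∪ F i) l)]
      have hz : ∑ i ∈ (Finset.range (k+1)).filter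
          (fun i => ¬ deg (F i) l < deg (S i ∪ F i) l),
          ((deg (S i ∪ F i) l : ℤ) - (deg (F i) l : ℤ)) = 0 := by
        apply Finset.sum_eq_zero
        intro i hi
        have h1 := (Finset.mem_filter.mp hi).2
        have h2 := hdg i
        omega
      rw [hz, add_zero]
    have hTne : Tset.Nonempty := by
      rw [Finset.nonempty_iff_ne_empty]
      intro h
      rw [h, Finset.sum_empty] at hTsplit
      omega
    rcases Nat.lt_or_ge 1 Tset.card with hcard | hcard
    · -- two distinct indices
      obtain ⟨a, ha, b, hb, hab⟩ := Finset.one_lt_card.mp hcard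
      have hmem : ∀ c ∈ Tset, c ≤ k ∧ deg (F c) l < deg (S c ∪ F c) l := by
        intro c hc
        have := Finset.mem_filter.mp hc
        exact ⟨Finset.mem_range_succ_iff.mp this.1, this.2⟩
      obtain ⟨ha1, ha2⟩ := hmem a ha
      obtain ⟨hb1, hb2⟩ := hmem b hb
      -- wlog i < j
      obtain ⟨i, j, hij, hik, hjk, hi2, hj2⟩ :
          ∃ i j, i < j ∧ i ≤ k ∧ j ≤ k ∧
            deg (F i) l < deg (S i ∪ F i) l ∧ deg (F j) l < deg (S j ∪ F j) l := by
        rcases lt_or_gt_of_ne hab with h | h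
        · exact ⟨a, b, h, ha1, hb1, ha2, hb2⟩
        · exact ⟨b, a, h, hb1, ha1, hb2, ha2⟩
      have hchain : deg (S i ∪ F i) l ≤ deg (F j) l :=
        deg_mono ((hGsub i hik).trans (hFmono' (i+1) j (by omega) (by omega)))
      have hle2 : deg (S j ∪ F j) l ≤ 2 := deg_le_two _ _
      -- deduce exact values
      have hgi : deg (S i ∪ F i) l = 1 := by omega
      have hdj : deg (F j) l = 1 := by omega
      have hdi : deg (F i) l = 0 := by omega
      have hgj : deg (S j ∪ F j) l = 2 := by omega
      have hFil : F i ∩ l = ∅ := inter_empty_of_deg hdi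
      have hlGj : l ⊆ S j ∪ F j := subset_of_deg_two hgj
      have hFjl : F j ∩ l ⊆ S i ∪ F i := by
        apply deg_flat_step hM hline (hS i hik).2 (hFflat j (by omega))
          ((hGsub i hik).trans (hFmono' (i+1) j (by omega) (by omega)))
        rw [hgi, hdj]
      intro x hx
      rcases hlGj hx with hxS | hxF
      · exact (hmemSall x).mpr ⟨j, hjk, hxS⟩
      · rcases hFjl (mem_inter hxF hx) with hxS' | hxF'
        · exact (hmemSall x).mpr ⟨i, hik, hxS'⟩
        · exact absurd (mem_inter hxF' hx) (by rw [hFil]; exact notMem_empty x)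
    · -- exactly one index, with increment 2
      obtain ⟨i, hTi⟩ := Finset.card_eq_one.mp (le_antisymm hcard hTne.card_pos)
      have hi : i ∈ Tset := hTi ▸ Finset.mem_singleton_self i
      have hik : i ≤ k := Finset.mem_range_succ_iff.mp (Finset.mem_filter.mp hi).1
      have hsum_i : T = (deg (S i ∪ F i) l : ℤ) - (deg (F i) l : ℤ) := by
        rw [hTsplit, hTi, Finset.sum_singleton]
      have hle2 : deg (S i ∪ F i) l ≤ 2 := deg_le_two _ _
      have hdi : deg (F i) l = 0 := by omega
      have hgi : deg (S i ∪ F i) l = 2 := by omega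
      have hFil : F i ∩ l = ∅ := inter_empty_of_deg hdi
      intro x hx
      rcases subset_of_deg_two hgi hx with hxS | hxF
      · exact (hmemSall x).mpr ⟨i, hik, hxS⟩
      · exact absurd (mem_inter hxF hx) (by rw [hFil]; exact notMem_empty x)
  -- final case analysis
  rcases eq_empty_or_nonempty (Sall ∩ l) with h0 | hne
  · rw [deg_of_inter_empty h0]
    have : T = 0 := by
      rw [hT]
      apply Finset.sum_eq_zero
      intro i hi
      have hik : i ≤ k := Finset.mem_range_succ_iff.mp hi
      have hSil : S i ∩ l = ∅ := by
        rw [eq_empty_iff_forall_notMem]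
        rintro x ⟨hxS, hxl⟩
        have : x ∈ Sall ∩ l := ⟨(hmemSall x).mpr ⟨i, hik, hxS⟩, hxl⟩
        exact (h0 ▸ this : x ∈ (∅ : Set α))
      rw [(hiff i hik).mp hSil]
      ring
    omega
  · by_cases hls : l ⊆ Sall
    · rw [deg_two_of hls hlne]
      have h1 := hP3 hls
      omega
    · rw [deg_one_of hne hls]
      have h1 : 1 ≤ T := by
        obtain ⟨x, hxS, hxl⟩ := hne
        obtain ⟨i, hik, hxi⟩ := (hmemSall x).mp hxS
        have hSil : S i ∩ l ≠ ∅ := fun h => (h ▸ mem_inter hxi hxl : x ∈ (∅ : Set α))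
        have h2 : deg (S i ∪ F i) l ≠ deg (F i) l := fun h => hSil ((hiff i hik).mpr h)
        have h3 := hdg i
        have := hsingle i hik
        omega
      have h2 : ¬ 2 ≤ T := fun h => hls (hP4 h)
      omega
end

section
/- Let w : L → ℝ with w ≥ 0, let F_1 ⊂ ⋯ ⊂ F_k be a chain of flats of M with F_k ⊊ E, let λ_1,…,λ_k ≥ 0 and λ ∈ ℝ, and set y := λ_1·𝟙_{F_1} + ⋯ + λ_k·𝟙_{F_k} + λ·𝟙_E with a(y)_l ≥ w_l for all l ∈ L. Let x be a perfect fractional matching such that w_l = a(y)_l for every l ∈ L with x_l > 0, and ∑_{l∈L} a(F_i)_l x_l = r(F_i) for every i = 1,…,k. Then ∑_{l∈L} w_l x_l = r(y), and x is a maximum weight perfect fractional matching: ∑_{l∈L} w_l x'_l ≤ ∑_{l∈L} w_l x_l for every perfect fractional matching x'. -/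
open Set

variable {α : Type*}

lemma Matroid.rk'_empty (M : Matroid α) : M.rk' (∅ : Set α) = 0 := by
  have : {n : ℕ | ∃ I, M.Indep I ∧ I ⊆ (∅ : Set α) ∧ I.ncard = n} = {0} := by
    ext n
    constructor
    · rintro ⟨I, hI, hsub, hcard⟩
      have : I = ∅ := Set.subset_empty_iff.mp hsub
      simp [this] at hcard
      simp [hcard.symm]
    · rintro rfl
      exact ⟨∅, M.empty_indep, le_refl _, Set.ncard_empty _⟩
  rw [Matroid.rk', this, csSup_singleton]

lemma line_nonempty_s12 {M : Matroid α} {l : Set α} (h : M.IsLine l) : l ≠ ∅ := by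
  rintro rfl
  have := M.rk'_empty
  rcases h.2 with h2 | h2 <;> omega

lemma deg_ground {M : Matroid α} {l : Set α} (h : M.IsLine l) : deg M.E l = 2 := by
  have h1 : M.E ∩ l = l := Set.inter_eq_right.mpr h.1
  rw [deg, if_neg (by rw [h1]; exact line_nonempty_s12 h), if_pos h.1]

/-- complementary slackness: a perfect fractional matching whose
support is tight in the dual and which is tight on all flats of the chain attains
the dual value, hence has maximum weight among perfect fractional matchings. -/
theorem stmt_12 (M : Matroid α) [M.RankFinite] (hM : M.Loopless')
    (L : Finset (Set α)) (hL : ∀ l ∈ L, M.IsLine l)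
    (w : Set α → ℝ) (hw : ∀ l ∈ L, 0 ≤ w l)
    (k : ℕ) (F : ℕ → Set α)
    (hFflat : ∀ i, 1 ≤ i → i ≤ k → M.IsFlat (F i))
    (hFmono : ∀ i, 1 ≤ i → i < k → F i ⊂ F (i+1))
    (hFtop : ∀ i, 1 ≤ i → i ≤ k → F i ⊂ M.E)
    (lam : ℕ → ℝ) (hlam : ∀ i, 1 ≤ i → i ≤ k → 0 ≤ lam i) (μ : ℝ)
    (hfeas : ∀ l ∈ L, w l ≤
      ∑ i ∈ Finset.Icc 1 k, lam i * (deg (F i) l : ℝ) + μ * (deg M.E l : ℝ))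
    (x : Set α → ℝ) (hx : IsFracMatching M L x)
    (hperf : 2 * ∑ l ∈ L, x l = (M.rk' M.E : ℝ))
    (hcs1 : ∀ l ∈ L, 0 < x l → w l =
      ∑ i ∈ Finset.Icc 1 k, lam i * (deg (F i) l : ℝ) + μ * (deg M.E l : ℝ))
    (hcs2 : ∀ i, 1 ≤ i → i ≤ k →
      ∑ l ∈ L, (deg (F i) l : ℝ) * x l = (M.rk' (F i) : ℝ)) :
    ∑ l ∈ L, w l * x l =
      (∑ i ∈ Finset.Icc 1 k, lam i * (M.rk' (F i) : ℝ) + μ * (M.rk' M.E : ℝ)) ∧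
    ∀ x' : Set α → ℝ, IsFracMatching M L x' →
      2 * ∑ l ∈ L, x' l = (M.rk' M.E : ℝ) →
      ∑ l ∈ L, w l * x' l ≤ ∑ l ∈ L, w l * x l := by
  have hdeg : ∀ l ∈ L, (deg M.E l : ℝ) = 2 := fun l hl => by
    rw [deg_ground (hL l hl)]; norm_num
  -- generic rearrangement
  have key : ∀ z : Set α → ℝ,
      ∑ l ∈ L, (∑ i ∈ Finset.Icc 1 k, lam i * (deg (F i) l : ℝ)
          + μ * (deg M.E l : ℝ)) * z l
      = ∑ i ∈ Finset.Icc 1 k, lam i * (∑ l ∈ L, (deg (F i) l : ℝ) * z l)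
          + μ * (2 * ∑ l ∈ L, z l) := by
    intro z
    simp only [add_mul, Finset.sum_add_distrib, Finset.sum_mul]
    congr 1
    · rw [Finset.sum_comm]
      refine Finset.sum_congr rfl fun i _ => ?_
      rw [Finset.mul_sum]
      exact Finset.sum_congr rfl fun l _ => by ring
    · rw [Finset.mul_sum, Finset.mul_sum]
      refine Finset.sum_congr rfl fun l hl => ?_
      rw [hdeg l hl]; ring
  have part1 : ∑ l ∈ L, w l * x l =
      ∑ i ∈ Finset.Icc 1 k, lam i * (M.rk' (F i) : ℝ) + μ * (M.rk' M.E : ℝ) := by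
    have h1 : ∑ l ∈ L, w l * x l =
        ∑ l ∈ L, (∑ i ∈ Finset.Icc 1 k, lam i * (deg (F i) l : ℝ)
          + μ * (deg M.E l : ℝ)) * x l := by
      refine Finset.sum_congr rfl fun l hl => ?_
      rcases (hx.1 l hl).eq_or_lt with h | h
      · rw [← h]; ring
      · rw [hcs1 l hl h]
    rw [h1, key x, ← hperf]
    congr 1
    refine Finset.sum_congr rfl fun i hi => ?_
    rw [Finset.mem_Icc] at hi
    rw [hcs2 i hi.1 hi.2]
  refine ⟨part1, fun x' hx' hperf' => ?_⟩
  rw [part1]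
  calc ∑ l ∈ L, w l * x' l
      ≤ ∑ l ∈ L, (∑ i ∈ Finset.Icc 1 k, lam i * (deg (F i) l : ℝ)
          + μ * (deg M.E l : ℝ)) * x' l := by
        refine Finset.sum_le_sum fun l hl => ?_
        exact mul_le_mul_of_nonneg_right (hfeas l hl) (hx'.1 l hl)
    _ = ∑ i ∈ Finset.Icc 1 k, lam i * (∑ l ∈ L, (deg (F i) l : ℝ) * x' l)
          + μ * (2 * ∑ l ∈ L, x' l) := key x'
    _ ≤ ∑ i ∈ Finset.Icc 1 k, lam i * (M.rk' (F i) : ℝ) + μ * (M.rk' M.E : ℝ) := by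
        rw [hperf']
        refine add_le_add (Finset.sum_le_sum fun i hi => ?_) le_rfl
        rw [Finset.mem_Icc] at hi
        exact mul_le_mul_of_nonneg_left (hx'.2 (F i) (hFflat i hi.1 hi.2))
          (hlam i hi.1 hi.2)
end
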